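/- Let n ≥ 4. The alternating word w = LRLR… of length n − 1 in the Farey binary tree has value 𝔉_{n−1}/𝔉_n, and the reduced degree sequence of the Haros graph G_{𝔉_{n−1}/𝔉_n} contains exactly 𝔉_{n−2} entries equal to 2, exactly 𝔉_{n−3} entries equal to 3, no entry equal to 4, exactly 𝔉_{n+1−k} entries equal to k for each 5 ≤ k ≤ n + 1, and exactly one entry equal to n + 2 (the boundary degree). -/
import Mathlib


/-- Symbols for paths in the Farey binary tree. -/
inductive LR
  | L
  | R
deriving DecidableEq

/-- One step in the Farey binary tree: update the current pair of fractions
(represented as pairs (numerator, denominator) of naturals). -/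
def fareyStep : ((ℕ × ℕ) × (ℕ × ℕ)) → LR → ((ℕ × ℕ) × (ℕ × ℕ))
  | ((a, b), (c, d)), LR.L => ((a, b), (a + c, b + d))
  | ((a, b), (c, d)), LR.R => ((a + c, b + d), (c, d))

/-- The final pair of fractions of a word: after reading the first symbol `L`
the current pair is (0/1, 1/1); the remaining symbols update it. -/
def finalPair (w : List LR) : (ℕ × ℕ) × (ℕ × ℕ) :=
  w.tail.foldl fareyStep ((0, 1), (1, 1))

/-- The value ⟨w⟩ of a word: the mediant of its final pair, as (numerator, denominator). -/
def value (w : List LR) : ℕ × ℕ :=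
  ((finalPair w).1.1 + (finalPair w).2.1, (finalPair w).1.2 + (finalPair w).2.2)

/-- A word over {L,R} is a Farey word when its first symbol is `L`. -/
def IsFareyWord (w : List LR) : Prop := w.head? = some LR.L

/-- Concatenation of degree sequences:
[a₁,…,a_s] ⊕ [b₁,…,b_t] = [a₁+1, a₂, …, a_{s−1}, a_s+b₁, b₂, …, b_{t−1}, b_t+1]. -/
def oplus (A B : List ℕ) : List ℕ :=
  (A.dropLast.modifyHead (· + 1)) ++ [A.getLastD 0 + B.headD 0] ++ B.tail.dropLast
    ++ [B.getLastD 0 + 1]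

/-- Update of the pair (D(left ancestor), D(right ancestor)) of unreduced degree
sequences along one symbol. -/
def degStep : (List ℕ × List ℕ) → LR → (List ℕ × List ℕ)
  | (A, B), LR.L => (A, oplus A B)
  | (A, B), LR.R => (oplus A B, B)

/-- The pair (D(a/b), D(c/d)) of unreduced degree sequences of the final pair of a word;
0/1 and 1/1 are both assigned the list [1,1]. -/
def degPair (w : List LR) : List ℕ × List ℕ :=
  w.tail.foldl degStep ([1, 1], [1, 1])

/-- The unreduced degree sequence D(⟨w⟩) = D(a/b) ⊕ D(c/d) of the value of a word. -/
def Dseq (w : List LR) : List ℕ :=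
  oplus (degPair w).1 (degPair w).2

/-- Reduction: [k₁,…,k_{q+1}] becomes [k₂,…,k_q, k₁+k_{q+1}]; the last entry is the
boundary degree and the remaining ones are the inner degrees. -/
def reduce (D : List ℕ) : List ℕ :=
  D.tail.dropLast ++ [D.headD 0 + D.getLastD 0]

/-- The reduced degree sequence of the Haros graph G_{⟨w⟩}. -/
def degSeq (w : List LR) : List ℕ := reduce (Dseq w)

/-- Degree-distribution entropy S of the Haros graph G_{⟨w⟩}:
S = −Σ_k P(k)·ln P(k), summed over the degree values occurring in the reduced
degree sequence, where P(k) = m(k)/q. -/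
noncomputable def Sent (w : List LR) : ℝ :=
  -∑ k ∈ (degSeq w).toFinset,
    (((degSeq w).count k : ℝ) / ((value w).2 : ℝ)) *
      Real.log (((degSeq w).count k : ℝ) / ((value w).2 : ℝ))

/-- Reduced entropy H of the Haros graph G_{⟨w⟩} (with the convention 0·ln 0 = 0,
automatic since Real.log 0 = 0). -/
noncomputable def Hent (w : List LR) : ℝ :=
  let x : ℝ := ((value w).1 : ℝ) / ((value w).2 : ℝ)
  if x ≤ 1 / 2 then
    Sent w + 2 * x * Real.log x + (1 - 2 * x) * Real.log (1 - 2 * x)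
  else
    Sent w + 2 * (1 - x) * Real.log (1 - x) + (2 * x - 1) * Real.log (2 * x - 1)

/-- The alternating word LRLR… of length m. -/
def zigzag (m : ℕ) : List LR :=
  (List.range m).map (fun i => if i % 2 = 0 then LR.L else LR.R)

-- auxiliary development

def Cl : ℕ → List ℕ
  | 0 => []
  | 1 => []
  | 2 => [2]
  | 3 => [2, 3]
  | (m+4) => if m % 2 = 0 then Cl (m+2) ++ [m+5] ++ Cl (m+3) else Cl (m+3) ++ [m+5] ++ Cl (m+2)

def Nl (m : ℕ) : List ℕ := ((m+1)/2 + 1) :: (Cl m ++ [m/2 + 1])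

lemma oplus_eq (x x' y y' : ℕ) (A B : List ℕ) :
    oplus (x :: (A ++ [x'])) (y :: (B ++ [y'])) =
      (x+1) :: (A ++ [x'+y] ++ (B ++ [y'+1])) := by
  have h1 : (x :: (A ++ [x'])).dropLast = x :: A := by
    rw [show x :: (A ++ [x']) = (x :: A) ++ [x'] from rfl, List.dropLast_concat]
  have h2 : (x :: (A ++ [x'])).getLastD 0 = x' := by
    rw [show x :: (A ++ [x']) = (x :: A) ++ [x'] from rfl, List.getLastD_concat]
  have h3 : (y :: (B ++ [y'])).getLastD 0 = y' := by
    rw [show y :: (B ++ [y']) = (y :: B) ++ [y'] from rfl, List.getLastD_concat]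
  simp only [oplus, h1, h2, h3, List.modifyHead_cons, List.headD_cons, List.tail_cons,
    List.dropLast_concat]
  simp

lemma zigzag_succ (m : ℕ) :
    zigzag (m+1) = zigzag m ++ [if m % 2 = 0 then LR.L else LR.R] := by
  simp [zigzag, List.range_succ]

lemma zigzag_ne_nil (m : ℕ) (h : 1 ≤ m) : zigzag m ≠ [] := by
  simp only [zigzag, ne_eq, List.map_eq_nil_iff, List.range_eq_nil]
  omega

lemma degPair_succ (m : ℕ) (h : 1 ≤ m) :
    degPair (zigzag (m+1)) =
      degStep (degPair (zigzag m)) (if m % 2 = 0 then LR.L else LR.R) := by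
  unfold degPair
  rw [zigzag_succ, List.tail_append_singleton_of_ne_nil (zigzag_ne_nil m h),
    List.foldl_append]
  rfl

lemma finalPair_succ (m : ℕ) (h : 1 ≤ m) :
    finalPair (zigzag (m+1)) =
      fareyStep (finalPair (zigzag m)) (if m % 2 = 0 then LR.L else LR.R) := by
  unfold finalPair
  rw [zigzag_succ, List.tail_append_singleton_of_ne_nil (zigzag_ne_nil m h),
    List.foldl_append]
  rfl

lemma Cl_succ (m : ℕ) (h : 3 ≤ m) :
    Cl (m+1) = if m % 2 = 1 then Cl (m-1) ++ [m+2] ++ Cl m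
               else Cl m ++ [m+2] ++ Cl (m-1) := by
  obtain ⟨k, rfl⟩ : ∃ k, m = k + 3 := ⟨m-3, by omega⟩
  show Cl (k+4) = _
  rw [Cl]
  have hpar : k % 2 = 0 ↔ (k+3) % 2 = 1 := by omega
  rcases Nat.even_or_odd k with he | ho
  · have h0 : k % 2 = 0 := Nat.even_iff.mp he
    rw [if_pos h0, if_pos (hpar.mp h0)]
    norm_num
  · have h1 : k % 2 = 1 := Nat.odd_iff.mp ho
    rw [if_neg (by omega), if_neg (by omega)]
    norm_num

lemma oplus_Nl_even (m : ℕ) (h : 3 ≤ m) (hp : m % 2 = 0) :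
    oplus (Nl m) (Nl (m-1)) = Nl (m+1) := by
  unfold Nl
  rw [oplus_eq, Cl_succ m h, if_neg (by omega)]
  have e1 : (m+1)/2 + 1 + 1 = (m+1+1)/2 + 1 := by omega
  have e2 : m/2 + 1 + ((m-1+1)/2 + 1) = m + 2 := by omega
  have e3 : (m-1)/2 + 1 + 1 = (m+1)/2 + 1 := by omega
  rw [e1, e2, e3]
  simp [List.append_assoc]

lemma oplus_Nl_odd (m : ℕ) (h : 3 ≤ m) (hp : m % 2 = 1) :
    oplus (Nl (m-1)) (Nl m) = Nl (m+1) := by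
  unfold Nl
  rw [oplus_eq, Cl_succ m h, if_pos hp]
  have e1 : (m-1+1)/2 + 1 + 1 = (m+1+1)/2 + 1 := by omega
  have e2 : (m-1)/2 + 1 + ((m+1)/2 + 1) = m + 2 := by omega
  have e3 : m/2 + 1 + 1 = (m+1)/2 + 1 := by omega
  rw [e1, e2, e3]
  simp [List.append_assoc]

lemma degPair_zigzag : ∀ m, 3 ≤ m → degPair (zigzag m) =
    if m % 2 = 0 then (Nl m, Nl (m-1)) else (Nl (m-1), Nl m) := by
  intro m hm
  induction m, hm using Nat.le_induction with
  | base => decide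
  | succ m hm ih =>
    rw [degPair_succ m (by omega), ih]
    rcases Nat.even_or_odd m with he | ho
    · have h0 : m % 2 = 0 := Nat.even_iff.mp he
      rw [if_pos h0, if_pos h0, if_neg (by omega)]
      show (Nl m, oplus (Nl m) (Nl (m-1))) = (Nl (m+1-1), Nl (m+1))
      rw [oplus_Nl_even m hm h0]
      simp
    · have h1 : m % 2 = 1 := Nat.odd_iff.mp ho
      rw [if_neg (by omega), if_neg (by omega), if_pos (by omega)]
      show (oplus (Nl (m-1)) (Nl m), Nl m) = (Nl (m+1), Nl (m+1-1))
      rw [oplus_Nl_odd m hm h1]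
      simp

lemma Dseq_zigzag (m : ℕ) (hm : 3 ≤ m) : Dseq (zigzag m) = Nl (m+1) := by
  unfold Dseq
  rw [degPair_zigzag m hm]
  rcases Nat.even_or_odd m with he | ho
  · have h0 : m % 2 = 0 := Nat.even_iff.mp he
    rw [if_pos h0]
    exact oplus_Nl_even m hm h0
  · have h1 : m % 2 = 1 := Nat.odd_iff.mp ho
    rw [if_neg (by omega)]
    exact oplus_Nl_odd m hm h1

lemma degSeq_zigzag (m : ℕ) (hm : 3 ≤ m) :
    degSeq (zigzag m) = Cl (m+1) ++ [m+3] := by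
  unfold degSeq reduce
  rw [Dseq_zigzag m hm]
  unfold Nl
  have h2 : ((((m+1+1)/2 + 1) :: (Cl (m+1) ++ [(m+1)/2 + 1]))).getLastD 0 = (m+1)/2 + 1 := by
    rw [show ((m+1+1)/2 + 1) :: (Cl (m+1) ++ [(m+1)/2 + 1])
        = (((m+1+1)/2 + 1) :: Cl (m+1)) ++ [(m+1)/2 + 1] from rfl, List.getLastD_concat]
  simp only [List.tail_cons, List.dropLast_concat, List.headD_cons, h2]
  congr 2
  omega

lemma two_step {P : ℕ → Prop} (h2 : P 2) (h3 : P 3)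
    (hstep : ∀ m, 3 ≤ m → P (m-1) → P m → P (m+1)) : ∀ m, 2 ≤ m → P m := by
  intro m
  induction m using Nat.strong_induction_on with
  | _ m ih =>
    intro hm
    match m, hm with
    | 2, _ => exact h2
    | 3, _ => exact h3
    | (j+4), _ =>
      have h := hstep (j+3) (by omega) (ih (j+2) (by omega) (by omega))
        (ih (j+3) (by omega) (by omega))
      simpa using h

lemma fib_sum' (a b c : ℕ) (h1 : b = a + 1) (h2 : c = a + 2) :
    Nat.fib c = Nat.fib a + Nat.fib b := by
  subst h1; subst h2; exact Nat.fib_add_two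

lemma count_Cl_rec (m k : ℕ) (hm : 3 ≤ m) :
    (Cl (m+1)).count k =
      (Cl m).count k + (Cl (m-1)).count k + (if m+2 = k then 1 else 0) := by
  rw [Cl_succ m hm]
  rcases Nat.even_or_odd m with he | ho
  · have h0 : m % 2 = 0 := Nat.even_iff.mp he
    rw [if_neg (by omega : ¬ m % 2 = 1), List.count_append, List.count_append,
      List.count_singleton']
    omega
  · rw [if_pos (Nat.odd_iff.mp ho), List.count_append, List.count_append,
      List.count_singleton']
    omega

lemma count_Cl_2 : ∀ m, 2 ≤ m → (Cl m).count 2 = Nat.fib (m-1) := by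
  apply two_step
  · decide
  · decide
  · intro m hm ih1 ih2
    rw [count_Cl_rec m 2 hm, ih1, ih2, if_neg (by omega)]
    have hf : Nat.fib (m+1-1) = Nat.fib (m-1-1) + Nat.fib (m-1) :=
      fib_sum' (m-1-1) (m-1) (m+1-1) (by omega) (by omega)
    omega

lemma count_Cl_3 : ∀ m, 2 ≤ m → (Cl m).count 3 = Nat.fib (m-2) := by
  apply two_step
  · decide
  · decide
  · intro m hm ih1 ih2
    rw [count_Cl_rec m 3 hm, ih1, ih2, if_neg (by omega)]
    have hf : Nat.fib (m+1-2) = Nat.fib (m-1-2) + Nat.fib (m-2) :=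
      fib_sum' (m-1-2) (m-2) (m+1-2) (by omega) (by omega)
    omega

lemma count_Cl_4 : ∀ m, 2 ≤ m → (Cl m).count 4 = 0 := by
  apply two_step
  · decide
  · decide
  · intro m hm ih1 ih2
    rw [count_Cl_rec m 4 hm, ih1, ih2, if_neg (by omega)]

lemma count_Cl_big : ∀ m, 2 ≤ m → ∀ k, 5 ≤ k → (Cl m).count k = Nat.fib (m+2-k) := by
  apply two_step
  · intro k hk
    have h0 : (Cl 2).count k = 0 :=
      List.count_eq_zero_of_not_mem (by simp [Cl]; omega)
    rw [h0, show 2+2-k = 0 by omega, Nat.fib_zero]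
  · intro k hk
    have h0 : (Cl 3).count k = 0 :=
      List.count_eq_zero_of_not_mem (by simp [Cl]; omega)
    rw [h0, show 3+2-k = 0 by omega, Nat.fib_zero]
  · intro m hm ih1 ih2 k hk
    rw [count_Cl_rec m k hm, ih1 k hk, ih2 k hk]
    rcases lt_trichotomy k (m+2) with h | h | h
    · rw [if_neg (by omega)]
      have hf : Nat.fib (m+1+2-k) = Nat.fib (m-1+2-k) + Nat.fib (m+2-k) :=
        fib_sum' (m-1+2-k) (m+2-k) (m+1+2-k) (by omega) (by omega)
      omega
    · rw [if_pos h.symm, show m+2-k = 0 by omega, show m-1+2-k = 0 by omega,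
        show m+1+2-k = 1 by omega]
      decide
    · rw [if_neg (by omega), show m+2-k = 0 by omega, show m-1+2-k = 0 by omega,
        show m+1+2-k = 0 by omega]
      decide

lemma finalPair_zigzag : ∀ m, 2 ≤ m → finalPair (zigzag m) =
    if m % 2 = 0 then ((Nat.fib m, Nat.fib (m+1)), (Nat.fib (m-1), Nat.fib m))
    else ((Nat.fib (m-1), Nat.fib m), (Nat.fib m, Nat.fib (m+1))) := by
  intro m hm
  induction m, hm using Nat.le_induction with
  | base => decide
  | succ m hm ih =>
    rw [finalPair_succ m (by omega), ih]
    obtain ⟨j, rfl⟩ : ∃ j, m = j + 1 := ⟨m-1, by omega⟩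
    have c1 : Nat.fib (j+2) = Nat.fib j + Nat.fib (j+1) := fib_sum' j (j+1) (j+2) rfl rfl
    have c2 : Nat.fib (j+3) = Nat.fib (j+1) + Nat.fib (j+2) :=
      fib_sum' (j+1) (j+2) (j+3) (by omega) (by omega)
    rcases Nat.even_or_odd (j+1) with he | ho
    · have h0 : (j+1) % 2 = 0 := Nat.even_iff.mp he
      rw [if_pos h0, if_pos h0, if_neg (by omega)]
      simp only [fareyStep, Prod.mk.injEq,
        show j+1-1 = j from rfl, show j+1+1-1 = j+1 from rfl,
        show j+1+1+1 = j+3 by omega, show j+1+1 = j+2 by omega]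
      exact ⟨trivial, by omega, by omega⟩
    · have h1 : (j+1) % 2 = 1 := Nat.odd_iff.mp ho
      rw [if_neg (by omega), if_neg (by omega), if_pos (by omega)]
      simp only [fareyStep, Prod.mk.injEq,
        show j+1-1 = j from rfl, show j+1+1-1 = j+1 from rfl,
        show j+1+1+1 = j+3 by omega, show j+1+1 = j+2 by omega]
      exact ⟨⟨by omega, by omega⟩, trivial⟩

lemma value_zigzag (m : ℕ) (hm : 2 ≤ m) :
    value (zigzag m) = (Nat.fib (m+1), Nat.fib (m+2)) := by
  unfold value
  rw [finalPair_zigzag m hm]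
  obtain ⟨j, rfl⟩ : ∃ j, m = j + 1 := ⟨m-1, by omega⟩
  have c1 : Nat.fib (j+2) = Nat.fib j + Nat.fib (j+1) := fib_sum' j (j+1) (j+2) rfl rfl
  have c2 : Nat.fib (j+3) = Nat.fib (j+1) + Nat.fib (j+2) :=
    fib_sum' (j+1) (j+2) (j+3) (by omega) (by omega)
  rcases Nat.even_or_odd (j+1) with he | ho
  · rw [if_pos (Nat.even_iff.mp he)]
    simp only [Prod.mk.injEq, show j+1-1 = j from rfl,
      show j+1+1 = j+2 by omega, show j+1+2 = j+3 by omega]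
    exact ⟨by omega, by omega⟩
  · have h1 : (j+1) % 2 = 1 := Nat.odd_iff.mp ho
    rw [if_neg (by omega : ¬ (j+1) % 2 = 0)]
    simp only [Prod.mk.injEq, show j+1-1 = j from rfl,
      show j+1+1 = j+2 by omega, show j+1+2 = j+3 by omega]
    exact ⟨by omega, by omega⟩

/-- for n ≥ 4 the alternating word LRLR… of length n − 1 has value
𝔉_{n−1}/𝔉_n (with 𝔉₀ = 𝔉₁ = 1, so 𝔉_m = Nat.fib (m+1)), and the reduced degree
sequence of G_{𝔉_{n−1}/𝔉_n} has exactly 𝔉_{n−2} entries equal to 2, 𝔉_{n−3} entries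
equal to 3, no entry 4, exactly 𝔉_{n+1−k} entries equal to k for 5 ≤ k ≤ n+1, and
exactly one entry n + 2 (the boundary degree). -/
theorem statement17 (n : ℕ) (hn : 4 ≤ n) :
    value (zigzag (n - 1)) = (Nat.fib n, Nat.fib (n + 1)) ∧
    (degSeq (zigzag (n - 1))).count 2 = Nat.fib (n - 1) ∧
    (degSeq (zigzag (n - 1))).count 3 = Nat.fib (n - 2) ∧
    (degSeq (zigzag (n - 1))).count 4 = 0 ∧
    (∀ k, 5 ≤ k → k ≤ n + 1 → (degSeq (zigzag (n - 1))).count k = Nat.fib (n + 2 - k)) ∧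
    (degSeq (zigzag (n - 1))).count (n + 2) = 1 := by
  obtain ⟨m, rfl⟩ : ∃ m, n = m + 4 := ⟨n-4, by omega⟩
  have hz : degSeq (zigzag (m+4-1)) = Cl (m+4) ++ [m+6] := by
    rw [show m+4-1 = m+3 from rfl, degSeq_zigzag (m+3) (by omega),
      show m+3+1 = m+4 by omega, show m+3+3 = m+6 by omega]
  refine ⟨?_, ?_, ?_, ?_, ?_, ?_⟩
  · rw [show m+4-1 = m+3 from rfl, value_zigzag (m+3) (by omega),
      show m+3+1 = m+4 by omega, show m+3+2 = m+4+1 by omega]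
  · rw [hz, List.count_append, count_Cl_2 (m+4) (by omega), List.count_singleton',
      if_neg (by omega)]
    omega
  · rw [hz, List.count_append, count_Cl_3 (m+4) (by omega), List.count_singleton',
      if_neg (by omega)]
    omega
  · rw [hz, List.count_append, count_Cl_4 (m+4) (by omega), List.count_singleton',
      if_neg (by omega)]
  · intro k hk1 hk2
    rw [hz, List.count_append, count_Cl_big (m+4) (by omega) k hk1,
      List.count_singleton', if_neg (by omega)]
    omega
  · rw [hz, show m+4+2 = m+6 by omega, List.count_append,
      count_Cl_big (m+4) (by omega) (m+6) (by omega),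
      show m+4+2-(m+6) = 0 by omega, List.count_singleton', if_pos rfl, Nat.fib_zero]
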